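/- There exists a graph G and a set P of separations of G satisfying the profile axioms (P1) and (P2) that is not principal. Concretely: let G be the countably infinite star with center c and leaves v₁, v₂, …, let F be a non-principal ultrafilter on ℕ, and let P consist of all separations (A_F, B_F) with B_F = {c} ∪ {v_i : i ∈ F} and A_F = (V(G)∖B_F) ∪ {c} for F ∈ 𝓕, together with all separations (A, V(G)) with |A| ≤ 1. Then P is a profile but not a principal profile. -/

import Mathlib

open Set

universe u

variable {V : Type*}

/-- A separation of a graph `G`: a pair of vertex sets covering `V` with no edge
between `A \ B` and `B \ A`. -/
def IsSep (G : SimpleGraph V) (A B : Set V) : Prop :=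
  A ∪ B = Set.univ ∧ ∀ a ∈ A \ B, ∀ b ∈ B \ A, ¬ G.Adj a b

/-- The order on separations: `(A,B) ≤ (C,D)` iff `A ⊆ C` and `D ⊆ B`. -/
def SepLE (A B C D : Set V) : Prop := A ⊆ C ∧ D ⊆ B

/-- Two separations are nested if one is comparable with the other or its reverse. -/
def Nested (A B C D : Set V) : Prop :=
  SepLE A B C D ∨ SepLE C D A B ∨ SepLE A B D C ∨ SepLE D C A B

/-- A set of separations is consistent. -/
def Consistent (P : Set (Set V × Set V)) : Prop :=
  ∀ A B C D : Set V, (A, B) ∈ P → SepLE C D A B → (D, C) ∉ P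

/-- The profile axiom (P2). -/
def P2 (P : Set (Set V × Set V)) : Prop :=
  ∀ p ∈ P, ∀ q ∈ P, (p.2 ∩ q.2, p.1 ∪ q.1) ∉ P

/-- A profile is principal if every subfamily with equal separators has a common
vertex in the intersection of the big sides minus the small sides. -/
def Principal (P : Set (Set V × Set V)) : Prop :=
  ∀ Q ⊆ P, Q.Nonempty → (∀ p ∈ Q, ∀ q ∈ Q, p.1 ∩ p.2 = q.1 ∩ q.2) →
    (⋂ p ∈ Q, (p.2 \ p.1)).Nonempty

/-- Robustness of a set of separations. -/
def Robust (G : SimpleGraph V) (P : Set (Set V × Set V)) : Prop :=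
  ∀ A B : Set V, (A, B) ∈ P → (A ∩ B).Finite →
    ∀ C D : Set V, IsSep G C D → (C ∩ D).Finite →
      ((B ∩ C) ∩ (A ∪ D)).ncard < (A ∩ B).ncard →
      ((B ∩ D) ∩ (A ∪ C)).ncard < (A ∩ B).ncard →
      ((B ∩ C, A ∪ D) ∉ P ∨ (B ∩ D, A ∪ C) ∉ P)

/-- `C` is a (connected) component of `G - X`. -/
def IsComponent (G : SimpleGraph V) (X C : Set V) : Prop :=
  C.Nonempty ∧ C ⊆ Xᶜ ∧ (G.induce C).Connected ∧
    ∀ D : Set V, C ⊆ D → D ⊆ Xᶜ → (G.induce D).Connected → D = C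

/-- The neighbourhood of a vertex set. -/
def setNbhd (G : SimpleGraph V) (C : Set V) : Set V :=
  {v | v ∉ C ∧ ∃ c ∈ C, G.Adj v c}

/-- A separation `(A,B)` distinguishes two profiles. -/
def Distinguishes (A B : Set V) (P P' : Set (Set V × Set V)) : Prop :=
  ((A, B) ∈ P ∧ (B, A) ∈ P') ∨ ((A, B) ∈ P' ∧ (B, A) ∈ P)

/-- A tree-decomposition of `G` modelled on a tree `T`. -/
structure TreeDecomp (G : SimpleGraph V) {τ : Type*} (T : SimpleGraph τ) where
  bag : τ → Set V
  isTree : T.IsTree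
  covers : ∀ v : V, ∃ t, v ∈ bag t
  coversEdges : ∀ u v : V, G.Adj u v → ∃ t, u ∈ bag t ∧ v ∈ bag t
  pathInter : ∀ t₁ t₂ t₃ : τ, ∀ p : T.Walk t₁ t₃, p.IsPath → t₂ ∈ p.support →
    bag t₁ ∩ bag t₃ ⊆ bag t₂

/-- The union of the bags on the side of `s` of the edge `ss'` of the decomposition tree. -/
def sideSet {G : SimpleGraph V} {τ : Type*} {T : SimpleGraph τ} (td : TreeDecomp G T)
    (s s' : τ) : Set V :=
  ⋃ t ∈ {t | (T.deleteEdges {s(s, s')}).Reachable s t}, td.bag t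

/-- The torso of the part `bag t`, as a graph on `V` whose edges live inside `bag t`. -/
def torso (G : SimpleGraph V) {τ : Type*} (T : SimpleGraph τ) (td : TreeDecomp G T)
    (t : τ) : SimpleGraph V where
  Adj x y := x ≠ y ∧ x ∈ td.bag t ∧ y ∈ td.bag t ∧
    (G.Adj x y ∨ ∃ t', T.Adj t t' ∧ x ∈ td.bag t' ∧ y ∈ td.bag t')
  symm := by
    refine ⟨?_⟩
    rintro x y ⟨h1, h2, h3, h4⟩
    refine ⟨h1.symm, h3, h2, ?_⟩
    rcases h4 with h | ⟨t', ht, hx, hy⟩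
    · exact Or.inl h.symm
    · exact Or.inr ⟨t', ht, hy, hx⟩
  loopless := ⟨by rintro x ⟨h1, -⟩; exact h1 rfl⟩

/-- The profile induced by an end of `G`: all separations of finite order such that the
component of the complement of the separator in which the end lives is contained in the
big side. -/
def endProfile (G : SimpleGraph V) (e : ↥G.end) : Set (Set V × Set V) :=
  {p | IsSep G p.1 p.2 ∧ ∃ hf : (p.1 ∩ p.2).Finite,
    ((e.val (Opposite.op hf.toFinset)).supp ⊆ p.2)}


/-- The countably infinite star with centre `none`. -/
def starGraph : SimpleGraph (Option ℕ) :=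
  SimpleGraph.fromRel (fun x _ => x = none)

/-- `B_F = {c} ∪ {vᵢ : i ∈ F}` in the star. -/
def Bset (F : Set ℕ) : Set (Option ℕ) := {none} ∪ {x | ∃ i ∈ F, x = some i}

/-- `A_F = (V ∖ B_F) ∪ {c}` in the star. -/
def Aset (F : Set ℕ) : Set (Option ℕ) := (Set.univ \ Bset F) ∪ {none}

/-- The set of separations built from a non-principal ultrafilter on `ℕ`. -/
def starP (F : Ultrafilter ℕ) : Set (Set (Option ℕ) × Set (Option ℕ)) :=
  {p | ∃ s ∈ F, p = (Aset s, Bset s)} ∪ {p | p.2 = Set.univ ∧ p.1.Subsingleton}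

lemma none_mem_Bset (s : Set ℕ) : (none : Option ℕ) ∈ Bset s := Or.inl rfl

lemma some_mem_Bset {s : Set ℕ} {i : ℕ} : (some i : Option ℕ) ∈ Bset s ↔ i ∈ s := by
  simp [Bset]

lemma none_mem_Aset (s : Set ℕ) : (none : Option ℕ) ∈ Aset s := Or.inr rfl

lemma some_mem_Aset {s : Set ℕ} {i : ℕ} : (some i : Option ℕ) ∈ Aset s ↔ i ∉ s := by
  simp [Aset, Bset]

lemma mem_F_nonempty (F : Ultrafilter ℕ) {s : Set ℕ} (hs : s ∈ F) : s.Nonempty :=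
  Filter.nonempty_of_mem hs

lemma Aset_inter_Bset (s : Set ℕ) : Aset s ∩ Bset s = {none} := by
  ext x
  cases x with
  | none => simp [none_mem_Aset, none_mem_Bset]
  | some i => simp [Set.mem_inter_iff, some_mem_Aset, some_mem_Bset]

/-- for a non-principal ultrafilter `F` on `ℕ`, the set `starP F` is
a set of separations of the infinite star that is a profile but not principal. -/
theorem nonprincipal_profile_exists (F : Ultrafilter ℕ)
    (hF : ∀ s ∈ F, s.Infinite) :
    (∀ p ∈ starP F, IsSep starGraph p.1 p.2) ∧
    Consistent (starP F) ∧ P2 (starP F) ∧ ¬ Principal (starP F) := by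
  refine ⟨?_, ?_, ?_, ?_⟩
  · -- IsSep
    rintro p (⟨s, hs, rfl⟩ | ⟨h2, h1⟩)
    · refine ⟨?_, ?_⟩
      · ext x
        cases x with
        | none => simp [none_mem_Aset]
        | some i =>
          simp only [Set.mem_union, some_mem_Aset, some_mem_Bset, Set.mem_univ, iff_true]
          tauto
      · rintro a ⟨ha1, ha2⟩ b ⟨hb1, hb2⟩ hadj
        have hadj' : a ≠ b ∧ (a = none ∨ b = none) := by
          simpa [starGraph, SimpleGraph.fromRel_adj] using hadj
        rcases hadj'.2 with rfl | rfl
        · exact ha2 (none_mem_Bset s)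
        · exact hb2 (none_mem_Aset s)
    · refine ⟨?_, ?_⟩
      · rw [h2]; exact Set.union_univ _
      · rintro a ⟨ha1, ha2⟩ b hb hadj
        exact ha2 (h2 ▸ Set.mem_univ a)
  · -- Consistent
    rintro A B C D (⟨s, hs, hAB⟩ | ⟨hB, hA⟩) ⟨hCA, hBD⟩ (⟨t, ht, hDC⟩ | ⟨hC, hD⟩)
    · rw [Prod.mk.injEq] at hAB hDC
      obtain ⟨rfl, rfl⟩ := hAB
      obtain ⟨rfl, rfl⟩ := hDC
      obtain ⟨i, his, hit⟩ := mem_F_nonempty F (Filter.inter_mem hs ht)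
      exact some_mem_Aset.mp (hCA (some_mem_Bset.mpr hit)) his
    · rw [Prod.mk.injEq] at hAB
      obtain ⟨rfl, rfl⟩ := hAB
      simp only at hC hD
      obtain ⟨i, hi⟩ := mem_F_nonempty F hs
      have := hD (hBD (none_mem_Bset s)) (hBD (some_mem_Bset.mpr hi))
      simp at this
    · rw [Prod.mk.injEq] at hDC
      obtain ⟨rfl, rfl⟩ := hDC
      obtain ⟨i, hi⟩ := mem_F_nonempty F ht
      simp only at hB
      subst hB
      exact some_mem_Aset.mp (hBD (Set.mem_univ _)) hi
    · simp only at hB hA hC hD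
      subst hC
      have := hA (hCA (Set.mem_univ (none : Option ℕ)))
        (hCA (Set.mem_univ (some 0 : Option ℕ)))
      simp at this
  · -- P2
    rintro p (⟨s, hs, rfl⟩ | ⟨hp2, hp1⟩) q (⟨t, ht, rfl⟩ | ⟨hq2, hq1⟩)
      (⟨u, hu, hr⟩ | ⟨hr2, hr1⟩)
    · rw [Prod.mk.injEq] at hr
      obtain ⟨h1, h2⟩ := hr
      obtain ⟨i, hist, hiu⟩ := mem_F_nonempty F
        (Filter.inter_mem (Filter.inter_mem hs ht) hu)
      have : (some i : Option ℕ) ∈ Aset u := by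
        rw [← h1]
        exact ⟨some_mem_Bset.mpr hist.1, some_mem_Bset.mpr hist.2⟩
      exact some_mem_Aset.mp this hiu
    · simp only at hr1
      obtain ⟨i, hi⟩ := mem_F_nonempty F (Filter.inter_mem hs ht)
      have := hr1 ⟨none_mem_Bset s, none_mem_Bset t⟩
        ⟨some_mem_Bset.mpr hi.1, some_mem_Bset.mpr hi.2⟩
      simp at this
    · rw [Prod.mk.injEq] at hr
      obtain ⟨h1, h2⟩ := hr
      obtain ⟨i, his, hiu⟩ := mem_F_nonempty F (Filter.inter_mem hs hu)
      have : (some i : Option ℕ) ∈ Aset u := by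
        rw [← h1]
        exact ⟨some_mem_Bset.mpr his, hq2 ▸ Set.mem_univ _⟩
      exact some_mem_Aset.mp this hiu
    · simp only at hr1
      obtain ⟨i, hi⟩ := mem_F_nonempty F hs
      have := hr1 ⟨none_mem_Bset s, hq2 ▸ Set.mem_univ _⟩
        ⟨some_mem_Bset.mpr hi, hq2 ▸ Set.mem_univ _⟩
      simp at this
    · rw [Prod.mk.injEq] at hr
      obtain ⟨h1, h2⟩ := hr
      obtain ⟨i, hit, hiu⟩ := mem_F_nonempty F (Filter.inter_mem ht hu)
      have : (some i : Option ℕ) ∈ Aset u := by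
        rw [← h1]
        exact ⟨hp2 ▸ Set.mem_univ _, some_mem_Bset.mpr hit⟩
      exact some_mem_Aset.mp this hiu
    · simp only at hr1
      obtain ⟨i, hi⟩ := mem_F_nonempty F ht
      have := hr1 ⟨hp2 ▸ Set.mem_univ _, none_mem_Bset t⟩
        ⟨hp2 ▸ Set.mem_univ _, some_mem_Bset.mpr hi⟩
      simp at this
    · rw [Prod.mk.injEq] at hr
      obtain ⟨h1, h2⟩ := hr
      obtain ⟨i, hiu⟩ := mem_F_nonempty F hu
      have : (some i : Option ℕ) ∈ Aset u := by
        rw [← h1]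
        exact ⟨hp2 ▸ Set.mem_univ _, hq2 ▸ Set.mem_univ _⟩
      exact some_mem_Aset.mp this hiu
    · replace hr2 : p.1 ∪ q.1 = Set.univ := hr2
      have h0 : ∀ x : Option ℕ, x ∈ p.1 ∪ q.1 := Set.eq_univ_iff_forall.mp hr2
      rcases h0 none with a | a <;> rcases h0 (some 0) with b | b <;>
        rcases h0 (some 1) with c | c <;>
        first
        | exact absurd (hp1 a b) (by simp)
        | exact absurd (hq1 a b) (by simp)
        | exact absurd (hp1 b c) (by simp)
        | exact absurd (hq1 b c) (by simp)
        | exact absurd (hp1 a c) (by simp)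
        | exact absurd (hq1 a c) (by simp)
  · -- not Principal
    intro hP
    have hQ := hP {p | ∃ s ∈ F, p = (Aset s, Bset s)} (fun p hp => Or.inl hp)
      ⟨(Aset Set.univ, Bset Set.univ), Set.univ, Filter.univ_mem, rfl⟩ ?_
    · obtain ⟨x, hx⟩ := hQ
      have hxmem : ∀ s ∈ F, x ∈ Bset s \ Aset s := by
        intro s hs
        exact Set.mem_iInter₂.mp hx (Aset s, Bset s) ⟨s, hs, rfl⟩
      obtain ⟨hx1, hx2⟩ := hxmem Set.univ Filter.univ_mem
      rcases hx1 with h | ⟨i, -, rfl⟩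
      · rw [Set.mem_singleton_iff] at h
        subst h
        exact hx2 (none_mem_Aset _)
      · have hic : ({i} : Set ℕ)ᶜ ∈ F :=
          Ultrafilter.compl_mem_iff_notMem.mpr
            (fun h => hF _ h (Set.finite_singleton i))
        have := (hxmem _ hic).1
        rw [some_mem_Bset] at this
        exact this rfl
    · rintro p ⟨s, hs, rfl⟩ q' ⟨t, ht, rfl⟩
      simp only
      rw [Aset_inter_Bset, Aset_inter_Bset]
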